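/- Let X be a normal space in which every one-point subset is Gδ. For every non-unit f ∈ B₁(X) and every positive integer r, there exists g ∈ B₁(X) with g ≠ 1 such that f = gʳ f. -/

import Mathlib

open Filter Topology

def IsBaireOne {X : Type*} [TopologicalSpace X] (f : X → ℝ) : Prop :=
  ∃ F : ℕ → X → ℝ, (∀ n, Continuous (F n)) ∧
    ∀ x, Filter.Tendsto (fun n => F n x) Filter.atTop (nhds (f x))

def B1 (X : Type*) [TopologicalSpace X] : Subring (X → ℝ) where
  carrier := {f | IsBaireOne f}
  zero_mem' := ⟨fun _ _ => 0, fun _ => continuous_const, fun _ => tendsto_const_nhds⟩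
  one_mem' := ⟨fun _ _ => 1, fun _ => continuous_const, fun _ => tendsto_const_nhds⟩
  add_mem' := by
    rintro f g ⟨F, hF, hFf⟩ ⟨G, hG, hGg⟩
    exact ⟨fun n => F n + G n, fun n => (hF n).add (hG n), fun x => (hFf x).add (hGg x)⟩
  mul_mem' := by
    rintro f g ⟨F, hF, hFf⟩ ⟨G, hG, hGg⟩
    exact ⟨fun n => F n * G n, fun n => (hF n).mul (hG n), fun x => (hFf x).mul (hGg x)⟩
  neg_mem' := by
    rintro f ⟨F, hF, hFf⟩
    exact ⟨fun n => -F n, fun n => (hF n).neg, fun x => (hFf x).neg⟩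

def zset {X : Type*} [TopologicalSpace X] (f : ↥(B1 X)) : Set X := {x | (f : X → ℝ) x = 0}

noncomputable def chi {X : Type*} (p : X) : X → ℝ := Set.indicator {p} (fun _ => 1)

def IsFsigma {X : Type*} [TopologicalSpace X] (s : Set X) : Prop :=
  ∃ c : ℕ → Set X, (∀ n, IsClosed (c n)) ∧ s = ⋃ n, c n


-- Auxiliary lemmas

lemma inv_isBaireOne {X : Type*} [TopologicalSpace X] {f : X → ℝ}
    (hf : IsBaireOne f) (h0 : ∀ x, f x ≠ 0) : IsBaireOne (fun x => (f x)⁻¹) := by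
  obtain ⟨F, hFc, hFt⟩ := hf
  refine ⟨fun n x => F n x / ((F n x) ^ 2 + 1 / (n + 1)), fun n => ?_, fun x => ?_⟩
  · apply (hFc n).div (((hFc n).pow 2).add continuous_const)
    intro x
    exact (by positivity : (0:ℝ) < F n x ^ 2 + 1 / ((n:ℝ) + 1)).ne'
  · have h1 : Tendsto (fun n : ℕ => (F n x) ^ 2 + 1 / (n + 1 : ℝ)) atTop
        (nhds ((f x) ^ 2 + 0)) :=
      (((hFt x).pow 2).add tendsto_one_div_add_atTop_nhds_zero_nat)
    have h2 : (f x) ^ 2 + 0 ≠ 0 := by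
      have := h0 x; positivity
    have := ((hFt x).div h1 h2)
    have e : f x / (f x ^ 2 + 0) = (f x)⁻¹ := by
      rw [add_zero, pow_two, div_mul_cancel_left₀ (h0 x)]
    rw [e] at this
    exact this

lemma chi_isBaireOne {X : Type*} [TopologicalSpace X] [T1Space X] [NormalSpace X]
    {p : X} (hp : IsGδ ({p} : Set X)) : IsBaireOne (chi p) := by
  obtain ⟨U, hUo, hUe⟩ := isGδ_iff_eq_iInter_nat.mp hp
  set V : ℕ → Set X := fun n => ⋂ k ∈ Finset.range (n + 1), U k with hV
  have hVo : ∀ n, IsOpen (V n) := fun n =>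
    isOpen_biInter_finset (fun k _ => hUo k)
  have hpV : ∀ n, p ∈ V n := by
    intro n
    simp only [hV, Set.mem_iInter]
    intro k _
    have : p ∈ ⋂ n, U n := by rw [← hUe]; exact rfl
    exact Set.mem_iInter.mp this k
  have hdisj : ∀ n, Disjoint ((V n)ᶜ) ({p} : Set X) := by
    intro n
    rw [Set.disjoint_singleton_right]
    simp [hpV n]
  choose φ hφ0 hφ1 _ using fun n =>
    exists_continuous_zero_one_of_isClosed (hVo n).isClosed_compl isClosed_singleton
      (hdisj n)
  refine ⟨fun n => φ n, fun n => (φ n).continuous, fun x => ?_⟩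
  by_cases hx : x = p
  · subst hx
    have : ∀ n, φ n x = 1 := fun n => hφ1 n rfl
    simp only [this, chi, Set.indicator_of_mem (Set.mem_singleton x)]
    exact tendsto_const_nhds
  · -- x ∉ ⋂ U n, so x ∉ U m for some m
    have hxU : x ∉ ⋂ n, U n := by rw [← hUe]; simpa using hx
    obtain ⟨m, hm⟩ := by simpa [Set.mem_iInter] using hxU
    have hev : ∀ n ≥ m, φ n x = 0 := by
      intro n hn
      apply hφ0 n
      simp only [hV, Set.mem_compl_iff, Set.mem_iInter]
      intro h
      exact hm (h m (Finset.mem_range.mpr (Nat.lt_succ_of_le hn)))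
    have : chi p x = 0 := Set.indicator_of_notMem (by simpa using hx) _
    rw [this]
    apply Tendsto.congr' _ tendsto_const_nhds
    filter_upwards [Filter.eventually_ge_atTop m] with n hn
    exact (hev n hn).symm

theorem stmt_9 {X : Type*} [TopologicalSpace X] [T1Space X] [NormalSpace X]
    (hG : ∀ p : X, IsGδ ({p} : Set X)) (f : ↥(B1 X)) (hf : ¬ IsUnit f)
    (r : ℕ) (hr : 0 < r) :
    ∃ g : ↥(B1 X), g ≠ 1 ∧ f = g ^ r * f := by
  -- First: the zero set of f is nonempty
  have hz : ∃ p : X, (f : X → ℝ) p = 0 := by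
    by_contra h
    push_neg at h
    apply hf
    refine IsUnit.of_mul_eq_one (a := f) ⟨fun x => ((f : X → ℝ) x)⁻¹,
      inv_isBaireOne f.2 h⟩ ?_
    ext x
    exact mul_inv_cancel₀ (h x)
  obtain ⟨p, hp⟩ := hz
  refine ⟨1 - ⟨chi p, chi_isBaireOne (hG p)⟩, ?_, ?_⟩
  · intro h
    have := congrFun (congrArg (Subtype.val) h) p
    simp only [chi] at this
    have h1 : chi p p = 1 := Set.indicator_of_mem (Set.mem_singleton p) _
    simp only [chi] at h1
    rw [show ((1 - (⟨Set.indicator {p} fun _ => 1, _⟩ : B1 X) : B1 X) : X → ℝ) p =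
      1 - Set.indicator {p} (fun _ => (1:ℝ)) p from rfl, h1] at this
    norm_num at this
  · ext x
    show (f : X → ℝ) x = ((1 - chi p) x) ^ r * (f : X → ℝ) x
    by_cases hx : x = p
    · subst hx
      rw [hp, mul_zero]
    · have : chi p x = 0 := Set.indicator_of_notMem (by simpa using hx) _
      simp [this]
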